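/- In a Hilbert space with orthonormal basis (e_n), the sequence of one-dimensional subspaces X_n = span{e_1 + e_{n+1}/n} is a DDD (total and minimal) but fails the skipped-blocking condition: no blocking of (X_n) forms a finite-dimensional decomposition of its span, because ∩_n [X_m]_{m≥n} = span{e_1} ≠ {0}. -/

import Mathlib

open Submodule Set Filter Topology
open RealInnerProductSpace

variable {E : Type*} [NormedAddCommGroup E] [NormedSpace ℝ E]

/-- A sequence of subspaces is a DDD: finite-dimensional, total and minimal. -/
def IsDDD (X : ℕ → Submodule ℝ E) : Prop :=
  (∀ n, FiniteDimensional ℝ (X n)) ∧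
  (⨆ n, X n).topologicalClosure = ⊤ ∧
  ∀ n, X n ⊓ (⨆ m ∈ {m | m ≠ n}, X m).topologicalClosure = ⊥

/-- `(W i)` is a finite-dimensional decomposition of its closed linear span:
every element of the closed span is the limit of partial sums of a unique
sequence of vectors `w i ∈ W i`. -/
def IsFDDof (W : ℕ → Submodule ℝ E) : Prop :=
  ∀ x ∈ (⨆ i, W i).topologicalClosure, ∃! w : ℕ → E,
    (∀ i, w i ∈ W i) ∧
      Filter.Tendsto (fun N => ∑ i ∈ Finset.range N, w i) Filter.atTop (nhds x)

/-- Skipped blocking decomposition: a DDD such that every skipped sequence of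
blocks is an FDD of its closed linear span. -/
def IsSBD (X : ℕ → Submodule ℝ E) : Prop :=
  IsDDD X ∧ ∀ n m : ℕ → ℕ, (∀ i, n i ≤ m i) → (∀ i, m i + 1 < n (i + 1)) →
    IsFDDof (fun i => ⨆ j ∈ Set.Icc (n i) (m i), X j)

/-- Minimal f.d. sequence which is a skipped blocking decomposition of its closed span. -/
def IsSBDofSpan (W : ℕ → Submodule ℝ E) : Prop :=
  (∀ n, FiniteDimensional ℝ (W n)) ∧
  (∀ n, W n ⊓ (⨆ m ∈ {m | m ≠ n}, W m).topologicalClosure = ⊥) ∧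
  ∀ n m : ℕ → ℕ, (∀ i, n i ≤ m i) → (∀ i, m i + 1 < n (i + 1)) →
    IsFDDof (fun i => ⨆ j ∈ Set.Icc (n i) (m i), W j)

/-- Norm of the skipped projection `R_{m,k}` onto `X[0,m)` with kernel the closed
span of the tail `X[k+1,∞)` (the spaces `X_m, …, X_k` are skipped). -/
noncomputable def skippedNorm (X : ℕ → Submodule ℝ E) (m k : ℕ) : ℝ :=
  sInf {C : ℝ | 0 ≤ C ∧ ∀ a ∈ (⨆ i ∈ Set.Iio m, X i),
    ∀ b ∈ (⨆ i ∈ Set.Ici (k + 1), X i).topologicalClosure, ‖a‖ ≤ C * ‖a + b‖}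

/-- Annihilator of a subspace in the continuous dual. -/
noncomputable def ann {F : Type*} [NormedAddCommGroup F] [NormedSpace ℝ F] (S : Submodule ℝ F) :
    Submodule ℝ (F →L[ℝ] ℝ) where
  carrier := {f | ∀ x ∈ S, f x = 0}
  add_mem' := by intro f g hf hg x hx; simp [hf x hx, hg x hx]
  zero_mem' := by intro x hx; simp
  smul_mem' := by intro c f hf x hx; simp [hf x hx]

/-- The predecomposition space `Y = [X_n^*]` of a DDD, where
`X_n^* = [X_m]^⊥_{m ≠ n}`. -/
noncomputable def predecomp (X : ℕ → Submodule ℝ E) : Submodule ℝ (E →L[ℝ] ℝ) :=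
  (⨆ n, ann ((⨆ m ∈ {m | m ≠ n}, X m).topologicalClosure)).topologicalClosure

/-- A sequence of subspaces is boundedly complete: boundedness of the partial sums
of a sequence of vectors from the subspaces implies norm convergence. -/
def IsBddCompl (W : ℕ → Submodule ℝ E) : Prop :=
  ∀ v : ℕ → E, (∀ i, v i ∈ W i) →
    BddAbove (Set.range fun N => ‖∑ i ∈ Finset.range N, v i‖) →
    ∃ s : E, Filter.Tendsto (fun N => ∑ i ∈ Finset.range N, v i) Filter.atTop (nhds s)

/-- A Schauder basis of `E`. -/
def IsSchauderBasis (e : ℕ → E) : Prop :=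
  ∀ x : E, ∃! a : ℕ → ℝ,
    Filter.Tendsto (fun N => ∑ i ∈ Finset.range N, a i • e i) Filter.atTop (nhds x)


section

section Aux
variable {H : Type*} [NormedAddCommGroup H] [InnerProductSpace ℝ H]

/-- elements of the closure of a sup of subspaces orthogonal to `u` are orthogonal to `u`. -/
lemma aux_orth {X : ℕ → Submodule ℝ H} {S : Set ℕ} {u : H}
    (h : ∀ m ∈ S, X m ≤ (ℝ ∙ u)ᗮ) {y : H}
    (hy : y ∈ (⨆ m ∈ S, X m).topologicalClosure) : ⟪u, y⟫ = 0 :=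
  Submodule.mem_orthogonal_singleton_iff_inner_right.mp
    ((Submodule.topologicalClosure_minimal _ (iSup₂_le h)
      (Submodule.isClosed_orthogonal _)) hy)

lemma aux_span_singleton_le_orth {u w : H} (hw : ⟪u, w⟫ = 0) : (ℝ ∙ w) ≤ (ℝ ∙ u)ᗮ := by
  rw [Submodule.span_le, Set.singleton_subset_iff]
  exact Submodule.mem_orthogonal_singleton_iff_inner_right.mpr hw

/-- sup of spans of singletons over a set equals span of the image. -/
lemma aux_sup_span {X : ℕ → Submodule ℝ H} {f : ℕ → H} (hX : ∀ n, X n = ℝ ∙ f n) (S : Set ℕ) :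
    (⨆ j ∈ S, X j) = Submodule.span ℝ (f '' S) := by
  apply le_antisymm
  · exact iSup₂_le fun j hj => (hX j).le.trans
      (Submodule.span_mono (Set.singleton_subset_iff.mpr ⟨j, hj, rfl⟩))
  · rw [Submodule.span_le]
    rintro - ⟨j, hj, rfl⟩
    exact Submodule.mem_iSup_of_mem j (Submodule.mem_iSup_of_mem hj
      ((hX j).symm ▸ Submodule.mem_span_singleton_self (f j)))

lemma aux_block (m : ℕ → ℕ) (h0 : m 0 = 0) (hm : StrictMono m) (j : ℕ) :
    ∃ i, m i ≤ j ∧ j < m (i + 1) := by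
  have hex : ∃ i, j < m (i + 1) := ⟨j, lt_of_lt_of_le (Nat.lt_succ_self j) hm.le_apply⟩
  refine ⟨Nat.find hex, ?_, Nat.find_spec hex⟩
  rcases Nat.eq_zero_or_eq_succ_pred (Nat.find hex) with h | h
  · rw [h, h0]; exact Nat.zero_le j
  · rw [h]
    exact le_of_not_gt (Nat.find_min hex (by rw [h]; exact Nat.lt_succ_self _))

end Aux

section Aux2
variable {H : Type*} [NormedAddCommGroup H] [InnerProductSpace ℝ H]

lemma aux_inner_f (e : ℕ → H) (he : Orthonormal ℝ e) (n k : ℕ) :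
    ⟪e 0 + ((n : ℝ) + 1)⁻¹ • e (n + 1), e (k + 1)⟫ = if n = k then ((n : ℝ) + 1)⁻¹ else 0 := by
  have hite := orthonormal_iff_ite.mp he
  rw [inner_add_left, real_inner_smul_left, hite, hite]
  simp [Nat.succ_ne_zero]

lemma aux_norm_sub (e : ℕ → H) (he : Orthonormal ℝ e) (n : ℕ) :
    ‖(e 0 + ((n : ℝ) + 1)⁻¹ • e (n + 1)) - e 0‖ = ((n : ℝ) + 1)⁻¹ := by
  have h1 : ‖e (n + 1)‖ = 1 := he.1 (n + 1)
  have : (e 0 + ((n : ℝ) + 1)⁻¹ • e (n + 1)) - e 0 = ((n : ℝ) + 1)⁻¹ • e (n + 1) := by abel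
  rw [this, norm_smul, h1]
  simp
  positivity

lemma aux_tendsto (e : ℕ → H) (he : Orthonormal ℝ e) :
    Tendsto (fun n : ℕ => e 0 + ((n : ℝ) + 1)⁻¹ • e (n + 1)) atTop (nhds (e 0)) := by
  rw [tendsto_iff_norm_sub_tendsto_zero]
  simp only [aux_norm_sub e he]
  have := tendsto_one_div_add_atTop_nhds_zero_nat (𝕜 := ℝ)
  simpa [one_div] using this

lemma aux_total (e : ℕ → H) (he : Orthonormal ℝ e)
    (htot : (Submodule.span ℝ (Set.range e)).topologicalClosure = ⊤)
    (S : Submodule ℝ H) (hS : IsClosed (S : Set H))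
    (hf : ∀ n : ℕ, e 0 + ((n : ℝ) + 1)⁻¹ • e (n + 1) ∈ S) : S = ⊤ := by
  have he0 : e 0 ∈ S := hS.mem_of_tendsto (aux_tendsto e he) (Filter.Eventually.of_forall hf)
  have hen : ∀ n, e n ∈ S := by
    intro n
    cases n with
    | zero => exact he0
    | succ k =>
      have hk : e (k + 1) = ((k : ℝ) + 1) • ((e 0 + ((k : ℝ) + 1)⁻¹ • e (k + 1)) - e 0) := by
        have : (e 0 + ((k : ℝ) + 1)⁻¹ • e (k + 1)) - e 0 = ((k : ℝ) + 1)⁻¹ • e (k + 1) := by abel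
        rw [this, smul_smul, mul_inv_cancel₀ (by positivity), one_smul]
      rw [hk]
      exact S.smul_mem _ (S.sub_mem (hf k) he0)
  have hle : Submodule.span ℝ (Set.range e) ≤ S :=
    Submodule.span_le.mpr (Set.range_subset_iff.mpr hen)
  exact le_antisymm le_top (htot ▸ Submodule.topologicalClosure_minimal _ hle hS)

lemma aux_span_sum (e : ℕ → H) (he : Orthonormal ℝ e) (a b : ℕ) {v : H}
    (hv : v ∈ Submodule.span ℝ ((fun n : ℕ => e 0 + ((n : ℝ) + 1)⁻¹ • e (n + 1)) '' Set.Ico a b)) :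
    v = ∑ k ∈ Finset.Ico a b, (((k : ℝ) + 1) * ⟪v, e (k + 1)⟫) •
      (e 0 + ((k : ℝ) + 1)⁻¹ • e (k + 1)) := by
  induction hv using Submodule.span_induction with
  | mem x hx =>
    obtain ⟨j, hj, rfl⟩ := hx
    rw [Finset.sum_eq_single j]
    · rw [aux_inner_f e he]
      simp [mul_inv_cancel₀ (show ((j : ℝ) + 1) ≠ 0 by positivity)]
    · intro k hk hkj
      rw [aux_inner_f e he, if_neg (Ne.symm hkj)]
      simp
    · intro hj'
      exact absurd (Finset.mem_Ico.mpr ⟨hj.1, hj.2⟩) hj'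
  | zero => simp
  | add x y hx hy ihx ihy =>
    conv_lhs => rw [ihx, ihy]
    rw [← Finset.sum_add_distrib]
    exact Finset.sum_congr rfl fun k _ => by rw [inner_add_left, mul_add, add_smul]
  | smul c x hx ih =>
    conv_lhs => rw [ih]
    rw [Finset.smul_sum]
    exact Finset.sum_congr rfl fun k _ => by
      rw [real_inner_smul_left, smul_smul, mul_left_comm]

end Aux2

end

/-- In a Hilbert space with orthonormal basis `(e n)`, the
one-dimensional subspaces `X n = span {e 0 + e (n+1)/(n+1)}` form a DDD which is
total and minimal, but no blocking of `(X n)` is an FDD of its closed span,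
because `⋂ n [X m]_{m ≥ n} = span {e 0} ≠ {0}`. -/
theorem stmt1 {H : Type*} [NormedAddCommGroup H] [InnerProductSpace ℝ H] [CompleteSpace H]
    (e : ℕ → H) (he : Orthonormal ℝ e)
    (htot : (Submodule.span ℝ (Set.range e)).topologicalClosure = ⊤)
    (X : ℕ → Submodule ℝ H)
    (hXdef : ∀ n, X n = Submodule.span ℝ {e 0 + ((n : ℝ) + 1)⁻¹ • e (n + 1)}) :
    IsDDD X ∧
    (∀ m : ℕ → ℕ, m 0 = 0 → StrictMono m →
      ¬ IsFDDof (fun i => ⨆ j ∈ Set.Ico (m i) (m (i + 1)), X j)) ∧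
    (⨅ n, (⨆ j ∈ Set.Ici n, X j).topologicalClosure) = Submodule.span ℝ {e 0} ∧
    Submodule.span ℝ {e 0} ≠ (⊥ : Submodule ℝ H) := by
  have hite := orthonormal_iff_ite (𝕜 := ℝ) |>.mp he
  set f : ℕ → H := fun n => e 0 + ((n : ℝ) + 1)⁻¹ • e (n + 1) with hfdef
  have hinner : ∀ n k : ℕ, ⟪f n, e (k + 1)⟫ = if n = k then ((n : ℝ) + 1)⁻¹ else 0 :=
    aux_inner_f e he
  have hne0 : e 0 ≠ 0 := by
    intro h
    have h1 := he.1 0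
    rw [h, norm_zero] at h1
    norm_num at h1
  have horth : ∀ j k : ℕ, j ≠ k → ⟪e (k + 1), f j⟫ = 0 := by
    intro j k h
    rw [real_inner_comm, hinner, if_neg h]
  have hfX : ∀ n, f n ∈ X n := fun n => (hXdef n) ▸ Submodule.mem_span_singleton_self _
  have hXf : ∀ n, X n = ℝ ∙ f n := fun n => hXdef n
  refine ⟨⟨?_, ?_, ?_⟩, ?_, ?_, ?_⟩
  · -- finite dimensional
    intro n
    rw [hXdef n]
    exact FiniteDimensional.span_of_finite ℝ (Set.finite_singleton _)
  · -- total
    refine aux_total e he htot _ (Submodule.isClosed_topologicalClosure _) fun n => ?_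
    exact Submodule.le_topologicalClosure _ (Submodule.mem_iSup_of_mem n (hfX n))
  · -- minimal
    intro n
    rw [eq_bot_iff]
    rintro x hx
    obtain ⟨hx1, hx2⟩ := Submodule.mem_inf.mp hx
    rw [hXdef n, Submodule.mem_span_singleton] at hx1
    obtain ⟨c, rfl⟩ := hx1
    have h0 : ⟪e (n + 1), c • f n⟫ = 0 := by
      refine aux_orth (fun m hm => ?_) hx2
      rw [hXf m]
      exact aux_span_singleton_le_orth (horth m n hm)
    rw [real_inner_smul_right, real_inner_comm, hinner, if_pos rfl] at h0
    have hc : c = 0 := by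
      rcases mul_eq_zero.mp h0 with h | h
      · exact h
      · exact absurd h (by positivity)
    rw [hc, zero_smul]
    exact Submodule.zero_mem _
  · -- no blocking is an FDD
    intro m hm0 hmmono hFDD
    have hWspan : ∀ i, (⨆ j ∈ Set.Ico (m i) (m (i + 1)), X j) =
        Submodule.span ℝ (f '' Set.Ico (m i) (m (i + 1))) := fun i => aux_sup_span hXf _
    have hsupW : ((⨆ i, ⨆ j ∈ Set.Ico (m i) (m (i + 1)), X j).topologicalClosure :
        Submodule ℝ H) = ⊤ := by
      refine aux_total e he htot _ (Submodule.isClosed_topologicalClosure _) fun n => ?_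
      obtain ⟨i, h1, h2⟩ := aux_block m hm0 hmmono n
      exact Submodule.le_topologicalClosure _ (Submodule.mem_iSup_of_mem i
        (Submodule.mem_iSup_of_mem n (Submodule.mem_iSup_of_mem (Set.mem_Ico.mpr ⟨h1, h2⟩)
          (hfX n))))
    obtain ⟨w, ⟨hwmem, hwt⟩, -⟩ := hFDD (e 0) (by rw [hsupW]; exact Submodule.mem_top)
    have hw0 : ∀ i, w i = 0 := by
      intro i
      have hwi : w i ∈ Submodule.span ℝ (f '' Set.Ico (m i) (m (i + 1))) :=
        (hWspan i) ▸ hwmem i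
      rw [aux_span_sum e he _ _ hwi]
      apply Finset.sum_eq_zero
      intro k hk
      have hk' := Finset.mem_Ico.mp hk
      have hcoef : ⟪e (k + 1), w i⟫ = 0 := by
        have hother : ∀ i', i' ≠ i → ⟪e (k + 1), w i'⟫ = 0 := by
          intro i' hi'
          have hdisj : ∀ j ∈ Set.Ico (m i') (m (i' + 1)), j ≠ k := by
            intro j hj
            rcases lt_or_gt_of_ne hi' with h | h
            · exact Nat.ne_of_lt (lt_of_lt_of_le hj.2
                ((hmmono.monotone (Nat.succ_le_of_lt h)).trans hk'.1))
            · exact (Nat.ne_of_lt (lt_of_lt_of_le hk'.2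
                ((hmmono.monotone (Nat.succ_le_of_lt h)).trans hj.1))).symm
          have hle : Submodule.span ℝ (f '' Set.Ico (m i') (m (i' + 1))) ≤
              (ℝ ∙ e (k + 1))ᗮ := by
            rw [Submodule.span_le]
            rintro - ⟨j, hj, rfl⟩
            exact Submodule.mem_orthogonal_singleton_iff_inner_right.mpr
              (horth j k (hdisj j hj))
          exact Submodule.mem_orthogonal_singleton_iff_inner_right.mp
            (hle ((hWspan i') ▸ hwmem i'))
        have hconst : ∀ N, i < N →
            ⟪e (k + 1), ∑ i' ∈ Finset.range N, w i'⟫ = ⟪e (k + 1), w i⟫ := by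
          intro N hN
          rw [inner_sum]
          exact Finset.sum_eq_single i (fun i' _ hi' => hother i' hi')
            (fun h => absurd (Finset.mem_range.mpr hN) h)
        have hlim : Tendsto (fun N => ⟪e (k + 1), ∑ i' ∈ Finset.range N, w i'⟫)
            atTop (nhds (0 : ℝ)) := by
          have h1 : ⟪e (k + 1), e 0⟫ = 0 := by rw [hite]; simp
          simpa [h1] using Filter.Tendsto.inner (𝕜 := ℝ) (tendsto_const_nhds (x := e (k + 1))) hwt
        have hlim2 : Tendsto (fun _ : ℕ => ⟪e (k + 1), w i⟫) atTop (nhds (0 : ℝ)) :=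
          hlim.congr' (eventually_atTop.mpr ⟨i + 1, fun N hN => hconst N hN⟩)
        exact tendsto_nhds_unique tendsto_const_nhds hlim2
      rw [real_inner_comm] at hcoef
      rw [hcoef, mul_zero, zero_smul]
    have hzero : (fun N => ∑ i ∈ Finset.range N, w i) = fun _ => (0 : H) :=
      funext fun N => Finset.sum_eq_zero fun i _ => hw0 i
    rw [hzero] at hwt
    exact hne0 (tendsto_nhds_unique tendsto_const_nhds hwt).symm
  · -- the intersection is span {e 0}
    apply le_antisymm
    · intro x hx
      have hxk : ∀ k : ℕ, ⟪e (k + 1), x⟫ = 0 := by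
        intro k
        have hx' : x ∈ (⨆ j ∈ Set.Ici (k + 1), X j).topologicalClosure :=
          (Submodule.mem_iInf _).mp hx (k + 1)
        refine aux_orth (fun j hj => ?_) hx'
        rw [hXf j]
        exact aux_span_singleton_le_orth (horth j k (Nat.ne_of_lt (Nat.lt_of_succ_le hj)).symm)
      set c : ℝ := ⟪e 0, x⟫ with hc
      set y : H := x - c • e 0 with hy
      have hyi : ∀ i, ⟪e i, y⟫ = 0 := by
        intro i
        rw [hy, inner_sub_right, real_inner_smul_right]
        cases i with
        | zero =>
          have h1 : ⟪e 0, e 0⟫ = 1 := by rw [hite]; simp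
          rw [h1]; ring
        | succ k =>
          have h1 : ⟪e (k + 1), e 0⟫ = 0 := by rw [hite]; simp
          rw [hxk k, h1, mul_zero, sub_zero]
      have hyle : Submodule.span ℝ (Set.range e) ≤ (ℝ ∙ y)ᗮ := by
        rw [Submodule.span_le]
        rintro - ⟨i, rfl⟩
        exact Submodule.mem_orthogonal_singleton_iff_inner_right.mpr (by rw [real_inner_comm]; exact hyi i)
      have htop : (⊤ : Submodule ℝ H) ≤ (ℝ ∙ y)ᗮ :=
        htot ▸ Submodule.topologicalClosure_minimal _ hyle (Submodule.isClosed_orthogonal _)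
      have hy0 : y = 0 := by
        have h2 : ⟪y, y⟫ = 0 :=
          Submodule.mem_orthogonal_singleton_iff_inner_right.mp (htop Submodule.mem_top)
        exact inner_self_eq_zero.mp h2
      have hxc : x = c • e 0 := by
        rw [← sub_eq_zero]; exact hy0
      rw [hxc]
      exact Submodule.smul_mem _ _ (Submodule.mem_span_singleton_self _)
    · refine le_iInf fun n => ?_
      rw [Submodule.span_le, Set.singleton_subset_iff]
      have : e 0 ∈ closure ((⨆ j ∈ Set.Ici n, X j : Submodule ℝ H) : Set H) := by
        refine mem_closure_of_tendsto (aux_tendsto e he) (eventually_atTop.mpr ⟨n, fun j hj => ?_⟩)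
        exact Submodule.mem_iSup_of_mem j (Submodule.mem_iSup_of_mem hj (hfX j))
      exact this
  · -- span {e 0} ≠ ⊥
    intro h
    exact hne0 (Submodule.span_singleton_eq_bot.mp h)
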